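/- arXiv:1411.4138 — 2 statements merged into one kernel-verified Lean document; each statement's English description precedes it below -/
import Mathlib

section
/- Let A be a symmetric idempotent n×n real matrix of rank j, and let u = (u_1, …, u_n) be a vector of independent random variables with E u_i = 0 and E e^{t u_i} ≤ e^{t²/2} for all t ∈ ℝ. Then for every t > 0, P( uᵀ A u > j + 2√(j t) + 2 t ) ≤ e^{−t}. -/
open MeasureTheory ProbabilityTheory Filter Matrix Real
open scoped ENNReal

lemma qtb_cast (b c x : ℝ) :
    -(b:ℂ) * (x:ℝ) ^ 2 + (c:ℂ) * x + 0 = ((-b * x ^ 2 + c * x : ℝ) : ℂ) := by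
  push_cast; ring

lemma qtb_integrable_exp_quad {b : ℝ} (hb : 0 < b) (c : ℝ) :
    Integrable (fun x : ℝ => Real.exp (-b * x ^ 2 + c * x)) := by
  have h := (integrable_cexp_quadratic (b := (b : ℂ)) (by simpa using hb) (c : ℂ) 0).norm
  have : (fun x : ℝ => ‖Complex.exp (-(b:ℂ) * (x:ℝ) ^ 2 + (c:ℂ) * x + 0)‖)
      = fun x : ℝ => Real.exp (-b * x ^ 2 + c * x) := by
    funext x
    rw [qtb_cast, Complex.norm_exp, Complex.ofReal_re]
  rwa [this] at h

lemma qtb_integral_exp_quad {b : ℝ} (hb : 0 < b) (c : ℝ) :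
    ∫ x : ℝ, Real.exp (-b * x ^ 2 + c * x) = Real.sqrt (π / b) * Real.exp (c ^ 2 / (4 * b)) := by
  have h := integral_cexp_quadratic (b := -(b : ℂ)) (by simpa using hb) (c : ℂ) 0
  apply Complex.ofReal_injective
  have e1 : (∫ x : ℝ, Complex.exp (-(b:ℂ) * (x:ℝ) ^ 2 + (c:ℂ) * x + 0))
      = ((∫ x : ℝ, Real.exp (-b * x ^ 2 + c * x) : ℝ) : ℂ) := by
    calc ∫ x : ℝ, Complex.exp (-(b:ℂ) * (x:ℝ) ^ 2 + (c:ℂ) * x + 0)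
        = ∫ x : ℝ, ((Real.exp (-b * x ^ 2 + c * x) : ℝ) : ℂ) := by
          congr 1; funext x; rw [qtb_cast, Complex.ofReal_exp]
      _ = _ := integral_ofReal
  have e2 : ((π : ℂ) / - -(b:ℂ)) = ((π / b : ℝ) : ℂ) := by push_cast; ring
  have e3 : (0 : ℂ) - (c:ℂ) ^ 2 / (4 * -(b:ℂ)) = ((c ^ 2 / (4 * b) : ℝ) : ℂ) := by
    push_cast; field_simp; ring
  have hπb : (0:ℝ) ≤ π / b := div_nonneg pi_pos.le hb.le
  rw [← e1, h, e2, e3, show ((1:ℂ)/2) = ((1/2 : ℝ) : ℂ) by norm_num,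
    ← Complex.ofReal_cpow hπb, ← Complex.ofReal_exp, ← Complex.ofReal_mul]
  rw [Real.sqrt_eq_rpow]

lemma qtb_lintegral_pi_prod : ∀ {m : ℕ} (f : Fin m → ℝ → ℝ≥0∞), (∀ k, Measurable (f k)) →
    ∫⁻ x : Fin m → ℝ, ∏ k, f k (x k) ∂(Measure.pi fun _ => (volume : Measure ℝ)) =
      ∏ k, ∫⁻ x, f k x := by
  intro m
  induction m with
  | zero => intro f hf; simp
  | succ m ih =>
    intro f hf
    have hmp := (measurePreserving_piFinSuccAbove (fun _ : Fin (m+1) => (volume : Measure ℝ)) 0).symm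
    rw [hmp.lintegral_map_equiv (fun x => ∏ k, f k (x k))]
    have heq : ∀ y : ℝ × (Fin m → ℝ),
        (∏ k, f k (((MeasurableEquiv.piFinSuccAbove (fun _ => ℝ) 0).symm y) k))
          = f 0 y.1 * ∏ k : Fin m, f k.succ (y.2 k) := by
      intro y
      rw [Fin.prod_univ_succ]
      simp [MeasurableEquiv.piFinSuccAbove_symm_apply, Fin.insertNth_zero, Fin.zero_succAbove]
    simp_rw [heq]
    calc ∫⁻ (a : ℝ × (Fin m → ℝ)), f 0 a.1 * ∏ k : Fin m, f k.succ (a.2 k)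
          ∂(volume : Measure ℝ).prod (Measure.pi fun _ => (volume : Measure ℝ))
        = (∫⁻ x, f 0 x) * ∫⁻ y : Fin m → ℝ, ∏ k : Fin m, f k.succ (y k)
            ∂(Measure.pi fun _ => (volume : Measure ℝ)) :=
          lintegral_prod_mul ((hf 0).aemeasurable)
            ((Finset.measurable_prod Finset.univ
              (fun (k : Fin m) _ => (hf k.succ).comp (measurable_pi_apply k))).aemeasurable)
      _ = ∏ k : Fin (m+1), ∫⁻ x, f k x := by
          rw [ih (fun k => f k.succ) (fun k => hf k.succ), Fin.prod_univ_succ]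

section
variable {Ω : Type} [MeasurableSpace Ω] {P : Measure Ω} [IsProbabilityMeasure P] {n : ℕ}

lemma qtb_subg_lin {u : Fin n → Ω → ℝ}
    (hmeas : ∀ i, Measurable (u i))
    (hindep : iIndepFun u P)
    (hmgfint : ∀ i (t : ℝ), Integrable (fun ω => Real.exp (t * u i ω)) P)
    (hsubg : ∀ i (t : ℝ), ∫ ω, Real.exp (t * u i ω) ∂P ≤ Real.exp (t ^ 2 / 2))
    (w : Fin n → ℝ) :
    Integrable (fun ω => Real.exp (∑ i, w i * u i ω)) P ∧
    ∫ ω, Real.exp (∑ i, w i * u i ω) ∂P ≤ Real.exp (∑ i, (w i) ^ 2 / 2) := by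
  set X : Fin n → Ω → ℝ := fun i ω => w i * u i ω with hX
  have hXindep : iIndepFun X P :=
    hindep.comp (fun i x => w i * x) (fun i => measurable_const_mul _)
  have hXmeas : ∀ i, Measurable (X i) := fun i => (hmeas i).const_mul _
  have hXint : ∀ i ∈ Finset.univ, Integrable (fun ω => Real.exp (1 * X i ω)) P := by
    intro i _
    simpa [hX] using hmgfint i (w i)
  have hInt := hXindep.integrable_exp_mul_sum hXmeas hXint
  have hsum : ∀ ω, (∑ i, X i) ω = ∑ i, w i * u i ω := by
    intro ω; simp [hX]
  constructor
  · refine hInt.congr ?_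
    filter_upwards with ω
    simp [hsum]
  · have hmgf : ∫ ω, Real.exp (∑ i, w i * u i ω) ∂P = mgf (∑ i, X i) P 1 := by
      rw [mgf]
      congr 1
      funext ω
      simp [hsum]
    rw [hmgf, hXindep.mgf_sum hXmeas]
    calc ∏ i, mgf (X i) P 1 ≤ ∏ i, Real.exp ((w i) ^ 2 / 2) := by
          apply Finset.prod_le_prod (fun i _ => mgf_nonneg)
          intro i _
          have : mgf (X i) P 1 = ∫ ω, Real.exp (w i * u i ω) ∂P := by
            simp [mgf, hX]
          rw [this]
          exact hsubg i (w i)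
      _ = Real.exp (∑ i, (w i) ^ 2 / 2) := by rw [← Real.exp_sum]

end

lemma qtb_proj_decomp {n j : ℕ} (A : Matrix (Fin n) (Fin n) ℝ)
    (hAsymm : Aᵀ = A) (hAidem : A * A = A) (hArank : A.rank = j) :
    ∃ v : Fin j → Fin n → ℝ,
      (∀ i i', A i i' = ∑ k, v k i * v k i') ∧
      (∀ k k', ∑ i, v k i * v k' i = if k = k' then 1 else 0) := by
  have hA : A.IsHermitian := by
    rw [Matrix.IsHermitian, Matrix.conjTranspose_eq_transpose_of_trivial]
    exact hAsymm
  set U : Matrix (Fin n) (Fin n) ℝ := (hA.eigenvectorUnitary : Matrix (Fin n) (Fin n) ℝ) with hU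
  set μ : Fin n → ℝ := hA.eigenvalues with hμdef
  have hUstar : star U * U = 1 := (Matrix.mem_unitaryGroup_iff').mp (hA.eigenvectorUnitary).2
  have hUstar' : U * star U = 1 := (Matrix.mem_unitaryGroup_iff).mp (hA.eigenvectorUnitary).2
  have hspec : A = U * Matrix.diagonal μ * star U := by
    have := hA.spectral_theorem
    simpa [hU, hμdef] using this
  -- idempotency of diagonal
  have hdiag : Matrix.diagonal μ * Matrix.diagonal μ = Matrix.diagonal μ := by
    have h1 : U * (Matrix.diagonal μ * Matrix.diagonal μ) * star U
        = U * Matrix.diagonal μ * star U := by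
      calc U * (Matrix.diagonal μ * Matrix.diagonal μ) * star U
          = (U * Matrix.diagonal μ * star U) * (U * Matrix.diagonal μ * star U) := by
            rw [Matrix.mul_assoc (U * Matrix.diagonal μ) (star U) _]
            rw [show star U * (U * Matrix.diagonal μ * star U)
              = Matrix.diagonal μ * star U by
                rw [← Matrix.mul_assoc, ← Matrix.mul_assoc, hUstar, Matrix.one_mul]]
            noncomm_ring
        _ = A * A := by rw [← hspec]
        _ = A := hAidem
        _ = U * Matrix.diagonal μ * star U := hspec
    have h2 := congrArg (fun M => star U * M * U) h1
    simpa [Matrix.mul_assoc, hUstar, hUstar',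
      show ∀ M : Matrix (Fin n) (Fin n) ℝ, star U * (U * M) = M by
        intro M; rw [← Matrix.mul_assoc, hUstar, Matrix.one_mul],
      show ∀ M : Matrix (Fin n) (Fin n) ℝ, M * star U * U = M by
        intro M; rw [Matrix.mul_assoc, hUstar, Matrix.mul_one]] using h2
  have hμ01 : ∀ i, μ i = 0 ∨ μ i = 1 := by
    intro i
    have h := congrFun (congrFun (hdiag) i) i
    simp [Matrix.diagonal_mul_diagonal, Matrix.diagonal_apply_eq] at h
    have h2 : μ i * μ i = μ i := by simpa using h
    have h0 : μ i * (μ i - 1) = 0 := by ring_nf; linarith [h2]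
    rcases mul_eq_zero.mp h0 with h | h
    · exact Or.inl h
    · right; linarith
  have hcard : Fintype.card {i // μ i ≠ 0} = j := by
    simp only [hμdef]
    rw [← hA.rank_eq_card_non_zero_eigs]
    exact hArank
  let e : Fin j ≃ {i // μ i ≠ 0} := (Fintype.equivFinOfCardEq hcard).symm
  refine ⟨fun k i => U i (e k), ?_, ?_⟩
  · intro i i'
    have hAelem : A i i' = ∑ l, U i l * μ l * U i' l := by
      rw [hspec]
      rw [Matrix.mul_apply]
      apply Finset.sum_congr rfl
      intro l _
      rw [Matrix.mul_apply]
      simp [Matrix.diagonal_apply, Finset.sum_ite_eq, Matrix.star_apply]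
    rw [hAelem]
    rw [← Finset.sum_filter_of_ne (p := fun l => μ l ≠ 0)
      (by intro x _ hx h0; apply hx; rw [h0]; ring)]
    rw [Finset.sum_subtype (p := fun l => μ l ≠ 0) (Finset.univ.filter (fun l => μ l ≠ 0))
      (by intro x; simp) (fun l => U i l * μ l * U i' l)]
    rw [← Equiv.sum_comp e (fun l : {i // μ i ≠ 0} => U i l.1 * μ l.1 * U i' l.1)]
    apply Finset.sum_congr rfl
    intro k _
    have h1 : μ (e k).1 = 1 := by
      rcases hμ01 (e k).1 with h | h
      · exact absurd h (e k).2
      · exact h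
    rw [h1]; ring
  · intro k k'
    have h := congrFun (congrFun hUstar (e k).1) (e k')
    rw [Matrix.mul_apply] at h
    have h1 : (1 : Matrix (Fin n) (Fin n) ℝ) (e k).1 (e k') = if (e k : Fin n) = e k' then 1 else 0 :=
      Matrix.one_apply
    rw [h1] at h
    have : ∑ i, U i (e k).1 * U i (e k') = if (e k : Fin n) = (e k' : Fin n) then 1 else 0 := by
      rw [← h]
      apply Finset.sum_congr rfl
      intro i _
      simp [Matrix.star_apply, mul_comm]
    rw [this]
    congr 1
    simp only [eq_iff_iff]
    constructor
    · intro hh; exact e.injective (Subtype.ext hh)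
    · intro hh; rw [hh]

lemma qtb_numeric {j : ℕ} (hj : 0 < j) {t : ℝ} (ht : 0 < t) :
    Real.exp (-(Real.sqrt (j*t) + t)) *
      (Real.sqrt (((j:ℝ) + 2*Real.sqrt (j*t) + 2*t)/j)) ^ j ≤ Real.exp (-t) := by
  have hjR : (0:ℝ) < j := by exact_mod_cast hj
  set s : ℝ := Real.sqrt (t/j) with hs_def
  have hs : 0 < s := Real.sqrt_pos.mpr (div_pos ht hjR)
  have hsq : s ^ 2 = t / j := Real.sq_sqrt (div_pos ht hjR).le
  have h2 : t = j * s ^ 2 := by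
    field_simp at hsq
    linarith [hsq]
  have h1 : Real.sqrt ((j:ℝ)*t) = j * s := by
    have : (j:ℝ) * t = (j:ℝ)^2 * (t/j) := by field_simp
    rw [this, Real.sqrt_mul (sq_nonneg _), Real.sqrt_sq hjR.le]
  have h3 : ((j:ℝ) + 2*Real.sqrt (j*t) + 2*t)/j = 1 + 2*s + 2*s^2 := by
    rw [h1]
    field_simp
    nlinarith [h2]
  have h4 : 1 + 2*s + 2*s^2 ≤ Real.exp (2*s) := by
    have := Real.quadratic_le_exp_of_nonneg (by linarith : (0:ℝ) ≤ 2*s)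
    nlinarith [this]
  have h5 : Real.sqrt (((j:ℝ) + 2*Real.sqrt (j*t) + 2*t)/j) ≤ Real.exp s := by
    rw [h3]
    have : Real.exp (2*s) = (Real.exp s)^2 := by
      rw [two_mul, Real.exp_add, sq]
    calc Real.sqrt (1 + 2*s + 2*s^2) ≤ Real.sqrt ((Real.exp s)^2) := by
          apply Real.sqrt_le_sqrt; rw [← this]; exact h4
      _ = Real.exp s := Real.sqrt_sq (Real.exp_nonneg s)
  have h6 : (Real.sqrt (((j:ℝ) + 2*Real.sqrt (j*t) + 2*t)/j)) ^ j ≤ Real.exp ((j:ℝ) * s) := by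
    rw [Real.exp_nat_mul]
    exact pow_le_pow_left₀ (Real.sqrt_nonneg _) h5 j
  calc Real.exp (-(Real.sqrt (j*t) + t)) * (Real.sqrt (((j:ℝ) + 2*Real.sqrt (j*t) + 2*t)/j)) ^ j
      ≤ Real.exp (-(Real.sqrt (j*t) + t)) * Real.exp ((j:ℝ)*s) := by
        apply mul_le_mul_of_nonneg_left h6 (Real.exp_nonneg _)
    _ = Real.exp (-t) := by
        rw [← Real.exp_add, h1, h2]
        ring_nf

/-- If `A` is a symmetric idempotent `n × n` real matrix of rank `j` and
`u₁,…,uₙ` are independent subgaussian random variables with variance proxy `1`, then for every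
`t > 0`, `P(uᵀAu > j + 2√(jt) + 2t) ≤ e^{-t}`. -/
theorem quadform_tail_bound
    {Ω : Type} [MeasurableSpace Ω] (P : Measure Ω) [IsProbabilityMeasure P]
    {n j : ℕ} (A : Matrix (Fin n) (Fin n) ℝ)
    (hAsymm : Aᵀ = A) (hAidem : A * A = A) (hArank : A.rank = j)
    (u : Fin n → Ω → ℝ)
    (hmeas : ∀ i, Measurable (u i))
    (hindep : iIndepFun u P)
    (hint : ∀ i, Integrable (u i) P)
    (hmean : ∀ i, ∫ ω, u i ω ∂P = 0)
    (hmgfint : ∀ i (t : ℝ), Integrable (fun ω => Real.exp (t * u i ω)) P)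
    (hsubg : ∀ i (t : ℝ), ∫ ω, Real.exp (t * u i ω) ∂P ≤ Real.exp (t ^ 2 / 2))
    (t : ℝ) (ht : 0 < t) :
    P {ω | (fun i => u i ω) ⬝ᵥ A.mulVec (fun i => u i ω) >
        (j : ℝ) + 2 * Real.sqrt (j * t) + 2 * t} ≤ ENNReal.ofReal (Real.exp (-t)) := by
  obtain ⟨v, hF1, hF2⟩ := qtb_proj_decomp A hAsymm hAidem hArank
  set Q : Ω → ℝ := fun ω => ∑ k, (∑ i, v k i * u i ω) ^ 2 with hQdef
  set a : ℝ := (j : ℝ) + 2 * Real.sqrt (j * t) + 2 * t with ha_def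
  -- rewrite the quadratic form
  have hkey : ∀ f : Fin n → ℝ, f ⬝ᵥ A.mulVec f = ∑ k, (∑ i, v k i * f i) ^ 2 := by
    intro f
    simp only [dotProduct, mulVec]
    calc ∑ i, f i * ∑ i', A i i' * f i'
        = ∑ i, ∑ i', ∑ k, (v k i * f i) * (v k i' * f i') := by
          apply Finset.sum_congr rfl; intro i _
          rw [Finset.mul_sum]
          apply Finset.sum_congr rfl; intro i' _
          rw [hF1 i i', Finset.sum_mul, Finset.mul_sum]
          apply Finset.sum_congr rfl; intro k _; ring
      _ = ∑ k, ∑ i, ∑ i', (v k i * f i) * (v k i' * f i') := by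
          rw [show (∑ i, ∑ i', ∑ k, (v k i * f i) * (v k i' * f i'))
              = ∑ i, ∑ k, ∑ i', (v k i * f i) * (v k i' * f i') from
            Finset.sum_congr rfl (fun i _ => Finset.sum_comm)]
          exact Finset.sum_comm
      _ = ∑ k, (∑ i, v k i * f i) ^ 2 := by
          apply Finset.sum_congr rfl; intro k _
          rw [sq, Finset.sum_mul_sum]
  have hsetQ : {ω | (fun i => u i ω) ⬝ᵥ A.mulVec (fun i => u i ω) > a}
      = {ω | a < Q ω} := by
    ext ω
    simp only [Set.mem_setOf_eq, gt_iff_lt, hQdef]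
    rw [hkey (fun i => u i ω)]
  rw [hsetQ]
  -- trivial case j = 0
  rcases Nat.eq_zero_or_pos j with hj0 | hj
  · subst hj0
    have hQ0 : ∀ ω, Q ω = 0 := by intro ω; simp [hQdef]
    have ha0 : 0 < a := by
      rw [ha_def]
      have : Real.sqrt ((0:ℕ) * t) = 0 := by norm_num
      rw [this]; norm_num; linarith
    have : {ω | a < Q ω} = ∅ := by
      ext ω; simp [hQ0, not_lt.mpr ha0.le]
    rw [this]
    simp
  -- main case
  have hjR : (0:ℝ) < j := by exact_mod_cast hj
  set g : ℝ := Real.sqrt (j * t) + t with hg_def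
  have hg : 0 < g := by
    have := Real.sqrt_nonneg ((j:ℝ) * t); rw [hg_def]; linarith
  have hag : a = j + 2 * g := by rw [ha_def, hg_def]; ring
  have ha : 0 < a := by rw [hag]; linarith
  set lam : ℝ := g / a with hlam_def
  have hlam0 : 0 < lam := div_pos hg ha
  have hlam_a : lam * a = g := by rw [hlam_def]; field_simp
  set b : ℝ := 1 / (4 * lam) with hb_def
  have hb : 0 < b := by rw [hb_def]; positivity
  have hb_eq : b = a / (4 * g) := by
    rw [hb_def, hlam_def]; field_simp
  have hbhalf : 1/2 < b := by
    rw [hb_eq, hag]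
    rw [lt_div_iff₀ (by linarith : 0 < 4 * g)]
    linarith
  have hlam_b : ∀ z : ℝ, z ^ 2 / (4 * b) = lam * z ^ 2 := by
    intro z
    rw [hb_def]
    field_simp
  set C : ℝ := Real.sqrt (π / b) with hC_def
  have hC : 0 < C := Real.sqrt_pos.mpr (div_pos pi_pos hb)
  set C' : ℝ := Real.sqrt (π / (b - 1/2)) with hC'_def
  have hC' : 0 < C' := Real.sqrt_pos.mpr (div_pos pi_pos (by linarith))
  set Z : Fin j → Ω → ℝ := fun k ω => ∑ i, v k i * u i ω with hZ_def
  have hZmeas : ∀ k, Measurable (Z k) := by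
    intro k
    apply Finset.measurable_sum
    intro i _
    exact (hmeas i).const_mul _
  have hQmeas : Measurable Q := by
    apply Finset.measurable_sum
    intro k _
    exact (hZmeas k).pow_const 2
  -- step M1 : pointwise Gaussian linearization
  have hM1 : ∀ z : ℝ, ENNReal.ofReal (Real.exp (lam * z ^ 2))
      = ENNReal.ofReal C⁻¹ * ∫⁻ s : ℝ, ENNReal.ofReal (Real.exp (-b * s ^ 2 + z * s)) := by
    intro z
    rw [← ofReal_integral_eq_lintegral_ofReal (qtb_integrable_exp_quad hb z)
      (Filter.Eventually.of_forall fun s => Real.exp_nonneg _)]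
    rw [qtb_integral_exp_quad hb z, hlam_b z, ← ENNReal.ofReal_mul (by positivity)]
    rw [← hC_def, ← mul_assoc, inv_mul_cancel₀ hC.ne', one_mul]
  -- measurability of the two-variable integrand
  have hGmeas : ∀ k : Fin j, Measurable (fun p : Ω × (Fin j → ℝ) =>
      ENNReal.ofReal (Real.exp (-b * (p.2 k) ^ 2 + Z k p.1 * p.2 k))) := by
    intro k
    apply ENNReal.measurable_ofReal.comp
    apply Real.measurable_exp.comp
    apply Measurable.add
    · exact ((measurable_pi_apply k).comp measurable_snd).pow_const 2 |>.const_mul _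
    · exact ((hZmeas k).comp measurable_fst).mul ((measurable_pi_apply k).comp measurable_snd)
  -- step M2 : express the mgf of Q as a double integral
  have hM2 : ∫⁻ ω, ENNReal.ofReal (Real.exp (lam * Q ω)) ∂P
      = ENNReal.ofReal C⁻¹ ^ j * ∫⁻ ω, (∫⁻ s : Fin j → ℝ,
          ∏ k, ENNReal.ofReal (Real.exp (-b * (s k) ^ 2 + Z k ω * s k))
          ∂(Measure.pi fun _ => (volume : Measure ℝ))) ∂P := by
    rw [← lintegral_const_mul' _ _ (by simp)]
    apply lintegral_congr
    intro ω
    have e1 : Real.exp (lam * Q ω) = ∏ k, Real.exp (lam * (Z k ω) ^ 2) := by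
      rw [← Real.exp_sum, hQdef]
      congr 1
      rw [Finset.mul_sum]
    rw [e1, ENNReal.ofReal_prod_of_nonneg (fun k _ => Real.exp_nonneg _)]
    have e2 : ∀ k : Fin j, ENNReal.ofReal (Real.exp (lam * (Z k ω) ^ 2))
        = ENNReal.ofReal C⁻¹ * ∫⁻ s : ℝ, ENNReal.ofReal (Real.exp (-b * s ^ 2 + Z k ω * s)) :=
      fun k => hM1 (Z k ω)
    rw [Finset.prod_congr rfl (fun k _ => e2 k), Finset.prod_mul_distrib,
      Finset.prod_const, Finset.card_univ, Fintype.card_fin]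
    congr 1
    rw [qtb_lintegral_pi_prod (fun k s => ENNReal.ofReal (Real.exp (-b * s ^ 2 + Z k ω * s)))
      (fun k => by
        apply ENNReal.measurable_ofReal.comp
        apply Real.measurable_exp.comp
        exact ((measurable_id.pow_const 2).const_mul _).add (measurable_id.const_mul _))]
  -- step M3 : swap the integrals
  have hM3 : ∫⁻ ω, (∫⁻ s : Fin j → ℝ,
        ∏ k, ENNReal.ofReal (Real.exp (-b * (s k) ^ 2 + Z k ω * s k))
        ∂(Measure.pi fun _ => (volume : Measure ℝ))) ∂P
      = ∫⁻ s : Fin j → ℝ, (∫⁻ ω,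
        ∏ k, ENNReal.ofReal (Real.exp (-b * (s k) ^ 2 + Z k ω * s k)) ∂P)
        ∂(Measure.pi fun _ => (volume : Measure ℝ)) := by
    apply lintegral_lintegral_swap
    apply Finset.measurable_prod Finset.univ (fun k _ => hGmeas k) |>.aemeasurable
  -- step M4 : for fixed s, bound the inner integral
  have hM4 : ∀ s : Fin j → ℝ,
      (∫⁻ ω, ∏ k, ENNReal.ofReal (Real.exp (-b * (s k) ^ 2 + Z k ω * s k)) ∂P)
      ≤ ∏ k, ENNReal.ofReal (Real.exp ((1/2 - b) * (s k) ^ 2)) := by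
    intro s
    set w : Fin n → ℝ := fun i => ∑ k, s k * v k i with hw_def
    have hZsum : ∀ ω, ∑ k, Z k ω * s k = ∑ i, w i * u i ω := by
      intro ω
      simp only [hZ_def, hw_def]
      calc ∑ k, (∑ i, v k i * u i ω) * s k
          = ∑ k, ∑ i, s k * v k i * u i ω := by
            apply Finset.sum_congr rfl; intro k _
            rw [Finset.sum_mul]
            apply Finset.sum_congr rfl; intro i _; ring
        _ = ∑ i, ∑ k, s k * v k i * u i ω := Finset.sum_comm
        _ = ∑ i, (∑ k, s k * v k i) * u i ω := by
            apply Finset.sum_congr rfl; intro i _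
            rw [Finset.sum_mul]
    have hworth : ∑ i, (w i) ^ 2 = ∑ k, (s k) ^ 2 := by
      simp only [hw_def]
      calc ∑ i, (∑ k, s k * v k i) ^ 2
          = ∑ i, ∑ k, ∑ k', (s k * v k i) * (s k' * v k' i) := by
            apply Finset.sum_congr rfl; intro i _
            rw [sq, Finset.sum_mul_sum]
        _ = ∑ k, ∑ k', ∑ i, (s k * v k i) * (s k' * v k' i) := by
            rw [show (∑ i, ∑ k, ∑ k', (s k * v k i) * (s k' * v k' i))
                = ∑ k, ∑ i, ∑ k', (s k * v k i) * (s k' * v k' i) from Finset.sum_comm]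
            apply Finset.sum_congr rfl; intro k _
            exact Finset.sum_comm
        _ = ∑ k, ∑ k', (s k * s k') * ∑ i, v k i * v k' i := by
            apply Finset.sum_congr rfl; intro k _
            apply Finset.sum_congr rfl; intro k' _
            rw [Finset.mul_sum]
            apply Finset.sum_congr rfl; intro i _; ring
        _ = ∑ k, (s k) ^ 2 := by
            apply Finset.sum_congr rfl; intro k _
            rw [Finset.sum_congr rfl (fun k' _ => by rw [hF2 k k'])]
            simp [Finset.sum_ite_eq, sq]
    have hsl := qtb_subg_lin hmeas hindep hmgfint hsubg w
    have e1 : ∀ ω, (∏ k, ENNReal.ofReal (Real.exp (-b * (s k) ^ 2 + Z k ω * s k)))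
        = ENNReal.ofReal (Real.exp (∑ k, -b * (s k) ^ 2))
            * ENNReal.ofReal (Real.exp (∑ i, w i * u i ω)) := by
      intro ω
      rw [← ENNReal.ofReal_mul (Real.exp_nonneg _), ← Real.exp_add, ← hZsum ω,
        ← Finset.sum_add_distrib, Real.exp_sum,
        ENNReal.ofReal_prod_of_nonneg (fun k _ => Real.exp_nonneg _)]
    calc ∫⁻ ω, ∏ k, ENNReal.ofReal (Real.exp (-b * (s k) ^ 2 + Z k ω * s k)) ∂P
        = ENNReal.ofReal (Real.exp (∑ k, -b * (s k) ^ 2))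
            * ∫⁻ ω, ENNReal.ofReal (Real.exp (∑ i, w i * u i ω)) ∂P := by
          rw [← lintegral_const_mul' _ _ ENNReal.ofReal_ne_top]
          exact lintegral_congr e1
      _ ≤ ENNReal.ofReal (Real.exp (∑ k, -b * (s k) ^ 2))
            * ENNReal.ofReal (Real.exp (∑ i, (w i) ^ 2 / 2)) := by
          apply mul_le_mul_right
          rw [← ofReal_integral_eq_lintegral_ofReal hsl.1
            (Filter.Eventually.of_forall fun ω => Real.exp_nonneg _)]
          exact ENNReal.ofReal_le_ofReal hsl.2
      _ = ∏ k, ENNReal.ofReal (Real.exp ((1/2 - b) * (s k) ^ 2)) := by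
          rw [← ENNReal.ofReal_mul (Real.exp_nonneg _), ← Real.exp_add]
          rw [show ∑ i, (w i) ^ 2 / 2 = (∑ i, (w i) ^ 2) / 2 by rw [Finset.sum_div], hworth]
          rw [show (∑ k, -b * (s k) ^ 2) + (∑ k, (s k) ^ 2) / 2
              = ∑ k, (1/2 - b) * (s k) ^ 2 by
            rw [Finset.sum_div, ← Finset.sum_add_distrib]
            apply Finset.sum_congr rfl; intro k _; ring]
          rw [Real.exp_sum, ENNReal.ofReal_prod_of_nonneg (fun k _ => Real.exp_nonneg _)]
  -- step M5 : the Gaussian pi integral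
  have hM5 : ∫⁻ x : Fin j → ℝ, ∏ k, ENNReal.ofReal (Real.exp ((1/2 - b) * (x k) ^ 2))
      ∂(Measure.pi fun _ => (volume : Measure ℝ)) = ENNReal.ofReal C' ^ j := by
    have hb2 : 0 < b - 1/2 := by linarith
    have hfun : (fun x : ℝ => Real.exp ((1/2 - b) * x ^ 2))
        = fun x : ℝ => Real.exp (-(b - 1/2) * x ^ 2 + 0 * x) := by
      funext x; ring_nf
    have hone : ∫⁻ x : ℝ, ENNReal.ofReal (Real.exp ((1/2 - b) * x ^ 2)) = ENNReal.ofReal C' := by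
      have hint2 : Integrable (fun x : ℝ => Real.exp ((1/2 - b) * x ^ 2)) := by
        rw [hfun]; exact qtb_integrable_exp_quad hb2 0
      rw [← ofReal_integral_eq_lintegral_ofReal hint2
        (Filter.Eventually.of_forall fun x => Real.exp_nonneg _)]
      congr 1
      rw [hfun, qtb_integral_exp_quad hb2 0]
      norm_num [hC'_def]
    rw [qtb_lintegral_pi_prod (fun k x => ENNReal.ofReal (Real.exp ((1/2 - b) * x ^ 2)))
      (fun k => by
        apply ENNReal.measurable_ofReal.comp
        exact Real.measurable_exp.comp ((measurable_id.pow_const 2).const_mul _))]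
    rw [Finset.prod_congr rfl (fun k _ => hone), Finset.prod_const, Finset.card_univ,
      Fintype.card_fin]
  -- total mgf bound
  have hMGF : ∫⁻ ω, ENNReal.ofReal (Real.exp (lam * Q ω)) ∂P
      ≤ ENNReal.ofReal C⁻¹ ^ j * ENNReal.ofReal C' ^ j := by
    rw [hM2, hM3]
    apply mul_le_mul_right
    calc ∫⁻ s : Fin j → ℝ, (∫⁻ ω,
          ∏ k, ENNReal.ofReal (Real.exp (-b * (s k) ^ 2 + Z k ω * s k)) ∂P)
          ∂(Measure.pi fun _ => (volume : Measure ℝ))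
        ≤ ∫⁻ s : Fin j → ℝ, ∏ k, ENNReal.ofReal (Real.exp ((1/2 - b) * (s k) ^ 2))
          ∂(Measure.pi fun _ => (volume : Measure ℝ)) := lintegral_mono hM4
      _ = ENNReal.ofReal C' ^ j := hM5
  -- Markov / Chernoff step
  set ε : ℝ≥0∞ := ENNReal.ofReal (Real.exp (lam * a)) with hε_def
  have hε0 : ε ≠ 0 := by
    rw [hε_def]
    simp [ENNReal.ofReal_eq_zero, not_le, Real.exp_pos]
  have hεtop : ε ≠ ⊤ := ENNReal.ofReal_ne_top
  have hsub : {ω | a < Q ω} ⊆ {ω | ε ≤ ENNReal.ofReal (Real.exp (lam * Q ω))} := by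
    intro ω hω
    exact ENNReal.ofReal_le_ofReal (Real.exp_le_exp.mpr
      (mul_le_mul_of_nonneg_left (le_of_lt hω) hlam0.le))
  have hmarkov := mul_meas_ge_le_lintegral₀
    (Measurable.aemeasurable (Measurable.ennreal_ofReal
      (Real.measurable_exp.comp (hQmeas.const_mul lam)))) ε (μ := P)
  have hCC : C'/C = Real.sqrt (a / j) := by
    have hb2 : b - 1/2 = j / (4 * g) := by
      rw [hb_eq, hag]; field_simp; ring
    rw [hC'_def, hC_def, ← Real.sqrt_div (le_of_lt (div_pos pi_pos (by linarith))) _]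
    congr 1
    rw [hb2, hb_eq]
    field_simp
  have hnum : Real.exp (-(lam * a)) * (C'/C) ^ j ≤ Real.exp (-t) := by
    rw [hlam_a, hCC, hg_def, ha_def]
    exact qtb_numeric hj ht
  calc P {ω | a < Q ω}
      ≤ P {ω | ε ≤ ENNReal.ofReal (Real.exp (lam * Q ω))} := measure_mono hsub
    _ = ε⁻¹ * (ε * P {ω | ε ≤ ENNReal.ofReal (Real.exp (lam * Q ω))}) := by
        rw [← mul_assoc, ENNReal.inv_mul_cancel hε0 hεtop, one_mul]
    _ ≤ ε⁻¹ * (ENNReal.ofReal C⁻¹ ^ j * ENNReal.ofReal C' ^ j) :=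
        mul_le_mul_right (hmarkov.trans hMGF) _
    _ = ENNReal.ofReal (Real.exp (-(lam * a)) * (C'/C) ^ j) := by
        rw [hε_def, ← ENNReal.ofReal_inv_of_pos (Real.exp_pos _), ← Real.exp_neg]
        rw [← ENNReal.ofReal_pow (by positivity), ← ENNReal.ofReal_pow (by positivity),
          ← ENNReal.ofReal_mul (by positivity), ← ENNReal.ofReal_mul (by positivity)]
        congr 2
        rw [← mul_pow]
        congr 1
        rw [inv_mul_eq_div]
    _ ≤ ENNReal.ofReal (Real.exp (-t)) := ENNReal.ofReal_le_ofReal hnum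
end

section
/- Let A be a symmetric idempotent n×n real matrix of rank j, and let u = (u_1, …, u_n) be a vector of independent random variables with E u_i = 0 and E e^{t u_i} ≤ e^{t²/2} for all t ∈ ℝ. Then for every m > j, P( uᵀ A u > m ) ≤ exp( −m/2 + √(2 m j − j²)/2 ), and consequently P( uᵀ A u > m ) ≤ exp( −m/2 + √(2 m j)/2 ). -/
open MeasureTheory ProbabilityTheory Filter Matrix Real


noncomputable def gphi (x : ℝ) : ℝ := (Real.sqrt (2*π))⁻¹ * Real.exp (-x^2/2)

lemma gphi_pos (x : ℝ) : 0 < gphi x := by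
  apply mul_pos _ (Real.exp_pos _)
  rw [inv_pos]
  exact Real.sqrt_pos.2 (by positivity)

lemma gphi_measurable : Measurable gphi := by
  unfold gphi; fun_prop

lemma gauss_integrable (b c : ℝ) (hb : 0 < b) :
    Integrable (fun x : ℝ => Real.exp (-b*x^2 + c*x)) := by
  have h : ∀ x : ℝ, -b*x^2 + c*x = -b*(x - c/(2*b))^2 + c^2/(4*b) := by
    intro x; field_simp; ring
  simp_rw [h, Real.exp_add]
  apply Integrable.mul_const
  have := (integrable_exp_neg_mul_sq hb).comp_sub_right (c/(2*b))
  simpa using this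

lemma gauss_integral (b c : ℝ) (hb : 0 < b) :
    ∫ x : ℝ, Real.exp (-b*x^2 + c*x) = Real.sqrt (π/b) * Real.exp (c^2/(4*b)) := by
  have h : ∀ x : ℝ, -b*x^2 + c*x = -b*(x - c/(2*b))^2 + c^2/(4*b) := by
    intro x; field_simp; ring
  simp_rw [h, Real.exp_add]
  rw [MeasureTheory.integral_mul_const, integral_sub_right_eq_self (fun x => Real.exp (-b*x^2)) (c/(2*b)),
    integral_gaussian]

lemma gphi_form (l c x : ℝ) : gphi x * Real.exp (l*x^2 + c*x)
    = (Real.sqrt (2*π))⁻¹ * Real.exp (-(1/2 - l)*x^2 + c*x) := by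
  unfold gphi
  rw [mul_assoc, ← Real.exp_add]
  ring_nf

lemma gphi_integrable {l : ℝ} (c : ℝ) (hl : l < 1/2) :
    Integrable (fun x : ℝ => gphi x * Real.exp (l*x^2 + c*x)) := by
  simp_rw [gphi_form]
  exact (gauss_integrable (1/2 - l) c (by linarith)).const_mul _

lemma gphi_integral {l : ℝ} (c : ℝ) (hl : l < 1/2) :
    ∫ x : ℝ, gphi x * Real.exp (l*x^2 + c*x)
      = (Real.sqrt (1 - 2*l))⁻¹ * Real.exp (c^2/(4*(1/2-l))) := by
  simp_rw [gphi_form]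
  rw [MeasureTheory.integral_const_mul, gauss_integral (1/2-l) c (by linarith), ← mul_assoc]
  congr 1
  rw [← Real.sqrt_inv, ← Real.sqrt_mul (by positivity)]
  rw [← Real.sqrt_inv]
  congr 1
  have h2 : (1:ℝ) - 2*l > 0 := by linarith
  rw [eq_comm, inv_eq_iff_eq_inv]
  field_simp

lemma G1 (c : ℝ) : ∫ x : ℝ, gphi x * Real.exp (c*x) = Real.exp (c^2/2) := by
  have := gphi_integral (l := 0) c (by norm_num)
  simp only [zero_mul, zero_add] at this
  rw [this]
  norm_num

lemma G2 {l : ℝ} (hl : l < 1/2) :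
    ∫ x : ℝ, gphi x * Real.exp (l*x^2) = (Real.sqrt (1 - 2*l))⁻¹ := by
  have := gphi_integral (l := l) 0 hl
  simp only [zero_mul, add_zero] at this
  rw [this]
  norm_num

lemma log_ineq {x : ℝ} (h0 : 0 < x) (h1 : x ≤ 1) :
    (Real.sqrt x)⁻¹ ≤ Real.exp ((1-x^2)/(4*x)) := by
  have hs : (0:ℝ) < Real.sqrt x := Real.sqrt_pos.2 h0
  rw [← Real.exp_log (inv_pos.2 hs), Real.exp_le_exp, Real.log_inv, Real.log_sqrt h0.le]
  rw [neg_div', div_le_div_iff₀ (by norm_num : (0:ℝ) < 2) (by linarith : (0:ℝ) < 4*x)]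
  have key : 0 ≤ 1 - x^2 + 2*x*Real.log x := by
    set g : ℝ → ℝ := fun t => 1 - t^2 + 2*t*Real.log t with hg
    have hder : ∀ t ∈ Set.Ioo x 1, HasDerivAt g (-2*t + 2*(Real.log t + 1)) t := by
      intro t ht
      have ht0 : (0:ℝ) < t := lt_trans h0 ht.1
      have h1' : HasDerivAt (fun t : ℝ => t^2) (2*t) t := by
        simpa using (hasDerivAt_pow 2 t)
      have h2' : HasDerivAt (fun t : ℝ => t * Real.log t) (Real.log t + 1) t := by
        have := (hasDerivAt_id' t).mul (Real.hasDerivAt_log (ne_of_gt ht0))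
        have h3 : t * t⁻¹ = 1 := mul_inv_cancel₀ (ne_of_gt ht0)
        exact this.congr_deriv (by rw [h3]; ring)
      have := ((hasDerivAt_const t (1:ℝ)).sub h1').add (h2'.const_mul 2)
      refine (this.congr_deriv (by ring)).congr_of_eventuallyEq ?_
      filter_upwards with s
      simp [hg]
      ring
    have hanti : AntitoneOn g (Set.Icc x 1) := by
      apply antitoneOn_of_deriv_nonpos (convex_Icc x 1)
      · apply ContinuousOn.add (by fun_prop)
        apply ContinuousOn.mul (by fun_prop)
        intro t ht
        exact (Real.continuousAt_log (by rintro rfl; exact absurd ht.1 (by linarith))).continuousWithinAt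
      · intro t ht
        rw [interior_Icc] at ht
        exact ((hder t ht).differentiableAt).differentiableWithinAt
      · intro t ht
        rw [interior_Icc] at ht
        rw [(hder t ht).deriv]
        have ht0 : (0:ℝ) < t := lt_trans h0 ht.1
        have := Real.log_le_sub_one_of_pos ht0
        nlinarith
    have := hanti (Set.mem_Icc.2 ⟨le_refl x, h1⟩) (Set.mem_Icc.2 ⟨h1, le_refl 1⟩) h1
    simpa [hg] using this
  nlinarith [key]

lemma matrix_decomp {n j : ℕ} (A : Matrix (Fin n) (Fin n) ℝ)
    (hAsymm : Aᵀ = A) (hAidem : A * A = A) (hArank : A.rank = j) :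
    ∃ Q : Fin j → Fin n → ℝ,
      (∀ k l, ∑ i, Q k i * Q l i = if k = l then 1 else 0) ∧
      (∀ x : Fin n → ℝ, x ⬝ᵥ A.mulVec x = ∑ k, (∑ i, Q k i * x i)^2) := by
  classical
  have hA : A.IsHermitian := by
    rw [Matrix.IsHermitian]
    ext i t
    simp [Matrix.conjTranspose_apply]
    exact congrFun (congrFun hAsymm i) t
  set ev := hA.eigenvalues with hev
  set v : Fin n → (Fin n → ℝ) := fun i => ⇑(hA.eigenvectorBasis i) with hv
  have heig : ∀ i, A *ᵥ v i = ev i • v i := fun i => hA.mulVec_eigenvectorBasis i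
  have hv_orth : ∀ i l, ∑ t, v i t * v l t = if i = l then 1 else 0 := by
    intro i l
    have := orthonormal_iff_ite.mp hA.eigenvectorBasis.orthonormal i l
    simpa [hv, PiLp.inner_apply, RCLike.inner_apply, conj_trivial, mul_comm] using this
  have hvne : ∀ i, v i ≠ 0 := fun i h => hA.eigenvectorBasis.orthonormal.ne_zero i (by simpa [hv] using congrArg (WithLp.toLp 2) h)
  have hev01 : ∀ i, ev i = 0 ∨ ev i = 1 := by
    intro i
    have h1 : A *ᵥ (A *ᵥ v i) = A *ᵥ v i := by
      rw [Matrix.mulVec_mulVec, hAidem]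
    rw [heig i, Matrix.mulVec_smul, heig i, smul_smul] at h1
    obtain ⟨t, ht⟩ := Function.ne_iff.mp (hvne i)
    have := congrFun h1 t
    simp only [Pi.smul_apply, smul_eq_mul] at this
    have h2 : ev i * ev i = ev i := mul_right_cancel₀ ht this
    have h3 : ev i * (ev i - 1) = 0 := by nlinarith [h2]
    rcases mul_eq_zero.mp h3 with h | h
    · exact Or.inl h
    · exact Or.inr (by linarith)
  -- cardinality
  have hcard : Fintype.card {i // ev i ≠ 0} = j := by
    rw [← hA.rank_eq_card_non_zero_eigs] at *
    exact hArank
  let e : Fin j ≃ {i // ev i ≠ 0} := (Fintype.equivFinOfCardEq hcard).symm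
  refine ⟨fun k => v (e k), ?_, ?_⟩
  · intro k l
    rw [hv_orth]
    by_cases h : k = l
    · simp [h]
    · have : (e k : Fin n) ≠ (e l : Fin n) := by
        intro hc
        exact h (e.injective (Subtype.ext hc))
      simp [h, this]
  · intro x
    -- spectral expansion
    have hexp : x ⬝ᵥ A.mulVec x = ∑ i, ev i * (∑ t, v i t * x t)^2 := by
      have hspec := hA.spectral_theorem
      set U : Matrix (Fin n) (Fin n) ℝ := (hA.eigenvectorUnitary : Matrix (Fin n) (Fin n) ℝ) with hU
      have hdiag : Matrix.diagonal ((RCLike.ofReal : ℝ → ℝ) ∘ ev) = Matrix.diagonal ev := by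
        simp
      have hstar : star U = Uᵀ := by
        rw [Matrix.star_eq_conjTranspose]
        ext i t
        simp [Matrix.conjTranspose_apply]
      have hUapp : ∀ t i, U t i = v i t := fun t i => hA.eigenvectorUnitary_apply t i
      rw [hspec, Unitary.conjStarAlgAut_apply, ← hU, hdiag, hstar]
      rw [← Matrix.mulVec_mulVec, ← Matrix.mulVec_mulVec, Matrix.mulVec_transpose,
        dotProduct_mulVec (v := x) (w := Matrix.diagonal ev *ᵥ Matrix.vecMul x U)]
      apply Finset.sum_congr rfl
      intro i _
      have hsum : ∑ t, x t * U t i = ∑ t, v i t * x t :=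
        Finset.sum_congr rfl (fun t _ => by rw [hUapp, mul_comm])
      simp only [Matrix.mulVec_diagonal, Matrix.vecMul, dotProduct, hsum]
      ring
    rw [hexp]
    have hterm : ∀ i, ev i * (∑ t, v i t * x t)^2
        = if ev i ≠ 0 then (∑ t, v i t * x t)^2 else 0 := by
      intro i
      rcases hev01 i with h | h <;> simp [h]
    simp_rw [hterm]
    rw [Finset.sum_ite, Finset.sum_const_zero, add_zero]
    rw [Finset.sum_subtype (p := fun i => ev i ≠ 0) (Finset.filter (fun i => ev i ≠ 0) Finset.univ)
      (by simp) (fun i => (∑ t, v i t * x t)^2)]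
    rw [← Equiv.sum_comp e (fun i : {i // ev i ≠ 0} => (∑ t, v (i : Fin n) t * x t)^2)]

lemma orth_norm {n j : ℕ} (Q : Fin j → Fin n → ℝ)
    (horth : ∀ k l, ∑ i, Q k i * Q l i = if k = l then 1 else 0) (g : Fin j → ℝ) :
    ∑ i, (∑ k, g k * Q k i)^2 = ∑ k, (g k)^2 := by
  have h1 : ∀ k l, ∑ i, (g k * g l) * (Q k i * Q l i) = (g k * g l) * (if k = l then 1 else 0) := by
    intro k l; rw [← Finset.mul_sum, horth]
  calc ∑ i, (∑ k, g k * Q k i)^2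
      = ∑ i, ∑ k, ∑ l, (g k * g l) * (Q k i * Q l i) := by
        apply Finset.sum_congr rfl; intro i _
        rw [sq, Finset.sum_mul_sum]
        apply Finset.sum_congr rfl; intro k _
        apply Finset.sum_congr rfl; intro l _
        ring
    _ = ∑ k, ∑ l, ∑ i, (g k * g l) * (Q k i * Q l i) := by
        rw [Finset.sum_comm]
        exact Finset.sum_congr rfl fun k _ => Finset.sum_comm
    _ = ∑ k, ∑ l, (g k * g l) * (if k = l then 1 else 0) := by
        exact Finset.sum_congr rfl fun k _ => Finset.sum_congr rfl fun l _ => h1 k l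
    _ = ∑ k, (g k)^2 := by
        apply Finset.sum_congr rfl; intro k _
        simp [mul_ite, Finset.sum_ite_eq, sq]

lemma sum_mgf_bound {Ω : Type} [MeasurableSpace Ω] (P : Measure Ω) [IsProbabilityMeasure P]
    {n : ℕ} (u : Fin n → Ω → ℝ) (hmeas : ∀ i, Measurable (u i))
    (hindep : iIndepFun u P)
    (hmgfint : ∀ i (t : ℝ), Integrable (fun ω => Real.exp (t * u i ω)) P)
    (hsubg : ∀ i (t : ℝ), ∫ ω, Real.exp (t * u i ω) ∂P ≤ Real.exp (t ^ 2 / 2))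
    (w : Fin n → ℝ) :
    Integrable (fun ω => Real.exp (∑ i, w i * u i ω)) P ∧
    ∫ ω, Real.exp (∑ i, w i * u i ω) ∂P ≤ Real.exp ((∑ i, (w i)^2)/2) := by
  set X : Fin n → Ω → ℝ := fun i ω => w i * u i ω with hX
  have hXeq : ∀ i, X i = (fun x => w i * x) ∘ u i := fun i => rfl
  have hXindep : iIndepFun X P := by
    rw [show X = fun i => (fun x => w i * x) ∘ u i from rfl]
    exact hindep.comp _ (fun i => measurable_id.const_mul (w i))
  have hXmeas : ∀ i, Measurable (X i) := fun i => (hmeas i).const_mul (w i)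
  have hXint : ∀ i ∈ Finset.univ, Integrable (fun ω => Real.exp (1 * X i ω)) P := by
    intro i _
    simpa [hX, one_mul] using hmgfint i (w i)
  have hsum : (fun ω => Real.exp (∑ i, w i * u i ω))
      = fun ω => Real.exp (1 * (∑ i, X i) ω) := by
    funext ω; simp [hX]
  have hint : Integrable (fun ω => Real.exp (∑ i, w i * u i ω)) P := by
    rw [hsum]
    exact hXindep.integrable_exp_mul_sum hXmeas hXint
  refine ⟨hint, ?_⟩
  have hmgf := hXindep.mgf_sum hXmeas (t := 1) Finset.univ
  have hlhs : ∫ ω, Real.exp (∑ i, w i * u i ω) ∂P = mgf (∑ i, X i) P 1 := by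
    rw [mgf]; rw [hsum]
  rw [hlhs, hmgf]
  have hle : ∀ i ∈ Finset.univ, mgf (X i) P 1 ≤ Real.exp ((w i)^2/2) := by
    intro i _
    have : mgf (X i) P 1 = ∫ ω, Real.exp (w i * u i ω) ∂P := by
      rw [mgf]; simp [hX]
    rw [this]
    exact hsubg i (w i)
  calc ∏ i, mgf (X i) P 1 ≤ ∏ i, Real.exp ((w i)^2/2) :=
        Finset.prod_le_prod (fun i _ => mgf_nonneg) hle
    _ = Real.exp ((∑ i, (w i)^2)/2) := by
        rw [← Real.exp_sum]
        congr 1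
        rw [Finset.sum_div]

lemma lin_id {j : ℕ} {c : ℝ} (a : Fin j → ℝ) :
    ENNReal.ofReal (Real.exp ((c^2/2) * ∑ k, (a k)^2))
      = ∫⁻ g : Fin j → ℝ, ENNReal.ofReal (∏ k, gphi (g k) * Real.exp (c * a k * (g k))) := by
  have hint : Integrable (fun g : Fin j → ℝ => ∏ k, gphi (g k) * Real.exp (c * a k * (g k))) := by
    apply Integrable.fintype_prod (f := fun k (x : ℝ) => gphi x * Real.exp (c * a k * x))
    intro k
    simpa using gphi_integrable (l := 0) (c * a k) (by norm_num)
  have hbochner : ∫ g : Fin j → ℝ, ∏ k, gphi (g k) * Real.exp (c * a k * (g k))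
      = Real.exp ((c^2/2) * ∑ k, (a k)^2) := by
    rw [volume_pi, MeasureTheory.integral_fintype_prod_eq_prod
      (f := fun k (x : ℝ) => gphi x * Real.exp (c * a k * x))]
    have : ∀ k : Fin j, ∫ x : ℝ, gphi x * Real.exp (c * a k * x) = Real.exp ((c * a k)^2/2) :=
      fun k => G1 (c * a k)
    simp_rw [this, ← Real.exp_sum]
    congr 1
    rw [Finset.mul_sum]
    apply Finset.sum_congr rfl
    intro k _
    ring
  rw [← hbochner, MeasureTheory.ofReal_integral_eq_lintegral_ofReal hint
    (by filter_upwards with g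
        exact Finset.prod_nonneg fun k _ => mul_nonneg (gphi_pos _).le (Real.exp_pos _).le)]

lemma key_mgf {Ω : Type} [MeasurableSpace Ω] (P : Measure Ω) [IsProbabilityMeasure P]
    {n j : ℕ} (u : Fin n → Ω → ℝ) (hmeas : ∀ i, Measurable (u i))
    (hindep : iIndepFun u P)
    (hmgfint : ∀ i (t : ℝ), Integrable (fun ω => Real.exp (t * u i ω)) P)
    (hsubg : ∀ i (t : ℝ), ∫ ω, Real.exp (t * u i ω) ∂P ≤ Real.exp (t ^ 2 / 2))
    (Q : Fin j → Fin n → ℝ)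
    (horth : ∀ k l, ∑ i, Q k i * Q l i = if k = l then 1 else 0)
    {c : ℝ} (hc : 0 < c) (hc1 : c^2 < 1) :
    ∫⁻ ω, ENNReal.ofReal (Real.exp ((c^2/2) * ∑ k, (∑ i, Q k i * u i ω)^2)) ∂P
      ≤ ENNReal.ofReal (((Real.sqrt (1 - c^2))⁻¹)^j) := by
  set Y : Fin j → Ω → ℝ := fun k ω => ∑ i, Q k i * u i ω with hY
  have hYmeas : ∀ k, Measurable (Y k) := by
    intro k
    apply Finset.measurable_sum
    intro i _
    exact (hmeas i).const_mul _
  -- the two-variable integrand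
  set H : Ω → (Fin j → ℝ) → ENNReal :=
    fun ω g => ENNReal.ofReal (∏ k, gphi (g k) * Real.exp (c * Y k ω * (g k))) with hH
  have hHmeas : Measurable (Function.uncurry H) := by
    apply Measurable.ennreal_ofReal
    apply Finset.measurable_prod
    intro k _
    exact (gphi_measurable.comp ((measurable_pi_apply k).comp measurable_snd)).mul
      ((((hYmeas k).comp measurable_fst).const_mul c).mul
        ((measurable_pi_apply k).comp measurable_snd)).exp
  have step1 : ∀ ω, ENNReal.ofReal (Real.exp ((c^2/2) * ∑ k, (Y k ω)^2))
      = ∫⁻ g : Fin j → ℝ, H ω g := fun ω => lin_id (fun k => Y k ω)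
  have inner_bound : ∀ g : Fin j → ℝ, ∫⁻ ω, H ω g ∂P
      ≤ ENNReal.ofReal (∏ k, gphi (g k) * Real.exp ((c^2/2) * (g k)^2)) := by
    intro g
    set w : Fin n → ℝ := fun i => c * ∑ k, g k * Q k i with hw
    have hphiprod : 0 ≤ ∏ k, gphi (g k) :=
      Finset.prod_nonneg fun k _ => (gphi_pos _).le
    have hrw : ∀ ω, (∏ k, gphi (g k) * Real.exp (c * Y k ω * (g k)))
        = (∏ k, gphi (g k)) * Real.exp (∑ i, w i * u i ω) := by
      intro ω
      rw [Finset.prod_mul_distrib, ← Real.exp_sum]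
      congr 1
      congr 1
      calc ∑ k, c * Y k ω * g k = ∑ k, ∑ i, c * (Q k i * u i ω) * g k := by
            apply Finset.sum_congr rfl; intro k _
            rw [show Y k ω = ∑ i, Q k i * u i ω from rfl, Finset.mul_sum, Finset.sum_mul]
        _ = ∑ i, ∑ k, c * (Q k i * u i ω) * g k := Finset.sum_comm
        _ = ∑ i, w i * u i ω := by
            apply Finset.sum_congr rfl; intro i _
            rw [show w i = c * ∑ k, g k * Q k i from rfl, Finset.mul_sum, Finset.sum_mul]
            apply Finset.sum_congr rfl; intro k _; ring
    obtain ⟨hint, hle⟩ := sum_mgf_bound P u hmeas hindep hmgfint hsubg w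
    have hwsum : (∑ i, (w i)^2)/2 = (c^2/2) * ∑ k, (g k)^2 := by
      have : ∑ i, (w i)^2 = c^2 * ∑ i, (∑ k, g k * Q k i)^2 := by
        rw [Finset.mul_sum]
        apply Finset.sum_congr rfl; intro i _
        rw [show w i = c * ∑ k, g k * Q k i from rfl]; ring
      rw [this, orth_norm Q horth g]; ring
    have hmeas2 : Measurable fun ω => ENNReal.ofReal (Real.exp (∑ i, w i * u i ω)) := by
      apply Measurable.ennreal_ofReal
      exact (Finset.measurable_sum _ fun i _ => (hmeas i).const_mul (w i)).exp
    calc ∫⁻ ω, H ω g ∂P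
        = ENNReal.ofReal (∏ k, gphi (g k))
            * ∫⁻ ω, ENNReal.ofReal (Real.exp (∑ i, w i * u i ω)) ∂P := by
          simp_rw [hH, hrw, ENNReal.ofReal_mul hphiprod]
          rw [lintegral_const_mul _ hmeas2]
      _ = ENNReal.ofReal (∏ k, gphi (g k))
            * ENNReal.ofReal (∫ ω, Real.exp (∑ i, w i * u i ω) ∂P) := by
          rw [MeasureTheory.ofReal_integral_eq_lintegral_ofReal hint
            (by filter_upwards with ω; exact (Real.exp_pos _).le)]
      _ ≤ ENNReal.ofReal (∏ k, gphi (g k))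
            * ENNReal.ofReal (Real.exp ((∑ i, (w i)^2)/2)) := by
          exact mul_le_mul_right (ENNReal.ofReal_le_ofReal hle) _
      _ = ENNReal.ofReal (∏ k, gphi (g k) * Real.exp ((c^2/2) * (g k)^2)) := by
          rw [← ENNReal.ofReal_mul hphiprod, hwsum]
          congr 1
          rw [Finset.prod_mul_distrib, ← Real.exp_sum, Finset.mul_sum]
  have final : ∫⁻ g : Fin j → ℝ, ENNReal.ofReal (∏ k, gphi (g k) * Real.exp ((c^2/2) * (g k)^2))
      = ENNReal.ofReal (((Real.sqrt (1 - c^2))⁻¹)^j) := by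
    have hl : c^2/2 < 1/2 := by linarith
    have hint : Integrable (fun g : Fin j → ℝ => ∏ k, gphi (g k) * Real.exp ((c^2/2) * (g k)^2)) := by
      apply Integrable.fintype_prod (f := fun (k : Fin j) (x : ℝ) => gphi x * Real.exp ((c^2/2) * x^2))
      intro k
      simpa using gphi_integrable (l := c^2/2) 0 hl
    rw [← MeasureTheory.ofReal_integral_eq_lintegral_ofReal hint
      (by filter_upwards with g
          exact Finset.prod_nonneg fun k _ => mul_nonneg (gphi_pos _).le (Real.exp_pos _).le)]
    congr 1
    rw [volume_pi, MeasureTheory.integral_fintype_prod_eq_prod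
      (f := fun (k : Fin j) (x : ℝ) => gphi x * Real.exp ((c^2/2) * x^2))]
    have : ∫ x : ℝ, gphi x * Real.exp ((c^2/2) * x^2) = (Real.sqrt (1 - c^2))⁻¹ := by
      have := G2 (l := c^2/2) hl
      rw [show (1:ℝ) - 2*(c^2/2) = 1 - c^2 by ring] at this
      exact this
    simp_rw [this, Finset.prod_const, Finset.card_univ, Fintype.card_fin]
  calc ∫⁻ ω, ENNReal.ofReal (Real.exp ((c^2/2) * ∑ k, (∑ i, Q k i * u i ω)^2)) ∂P
      = ∫⁻ ω, (∫⁻ g : Fin j → ℝ, H ω g) ∂P := lintegral_congr step1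
    _ = ∫⁻ g : Fin j → ℝ, (∫⁻ ω, H ω g ∂P) := lintegral_lintegral_swap hHmeas.aemeasurable
    _ ≤ ∫⁻ g : Fin j → ℝ, ENNReal.ofReal (∏ k, gphi (g k) * Real.exp ((c^2/2) * (g k)^2)) :=
        lintegral_mono inner_bound
    _ = ENNReal.ofReal (((Real.sqrt (1 - c^2))⁻¹)^j) := final


/-- If `A` is a symmetric idempotent `n × n` real matrix of rank `j` and
`u₁,…,uₙ` are independent subgaussian random variables with variance proxy `1`, then for every
`m > j`, `P(uᵀAu > m) ≤ exp(-m/2 + √(2mj - j²)/2)`, and consequently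
`P(uᵀAu > m) ≤ exp(-m/2 + √(2mj)/2)`. -/
theorem quadform_tail_bound'
    {Ω : Type} [MeasurableSpace Ω] (P : Measure Ω) [IsProbabilityMeasure P]
    {n j : ℕ} (A : Matrix (Fin n) (Fin n) ℝ)
    (hAsymm : Aᵀ = A) (hAidem : A * A = A) (hArank : A.rank = j)
    (u : Fin n → Ω → ℝ)
    (hmeas : ∀ i, Measurable (u i))
    (hindep : iIndepFun u P)
    (hint : ∀ i, Integrable (u i) P)
    (hmean : ∀ i, ∫ ω, u i ω ∂P = 0)
    (hmgfint : ∀ i (t : ℝ), Integrable (fun ω => Real.exp (t * u i ω)) P)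
    (hsubg : ∀ i (t : ℝ), ∫ ω, Real.exp (t * u i ω) ∂P ≤ Real.exp (t ^ 2 / 2))
    (m : ℝ) (hm : (j : ℝ) < m) :
    P {ω | (fun i => u i ω) ⬝ᵥ A.mulVec (fun i => u i ω) > m} ≤
        ENNReal.ofReal (Real.exp (-m / 2 + Real.sqrt (2 * m * j - (j : ℝ) ^ 2) / 2)) ∧
      P {ω | (fun i => u i ω) ⬝ᵥ A.mulVec (fun i => u i ω) > m} ≤
        ENNReal.ofReal (Real.exp (-m / 2 + Real.sqrt (2 * m * j) / 2)) := by
  classical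
  suffices h1 : P {ω | (fun i => u i ω) ⬝ᵥ A.mulVec (fun i => u i ω) > m} ≤
      ENNReal.ofReal (Real.exp (-m / 2 + Real.sqrt (2 * m * j - (j:ℝ)^2) / 2)) by
    refine ⟨h1, h1.trans (ENNReal.ofReal_le_ofReal (Real.exp_le_exp.2 ?_))⟩
    have h2 : Real.sqrt (2*m*j - (j:ℝ)^2) ≤ Real.sqrt (2*m*j) :=
      Real.sqrt_le_sqrt (by nlinarith [sq_nonneg (j:ℝ)])
    linarith
  obtain ⟨Q, horth, hquad⟩ := matrix_decomp A hAsymm hAidem hArank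
  have hjnn : (0:ℝ) ≤ (j:ℝ) := Nat.cast_nonneg j
  have hmpos : 0 < m := lt_of_le_of_lt hjnn hm
  rcases Nat.eq_zero_or_pos j with hj0 | hjpos
  · subst hj0
    have hset : {ω | (fun i => u i ω) ⬝ᵥ A.mulVec (fun i => u i ω) > m} = ∅ := by
      ext ω
      simp only [Set.mem_setOf_eq, Set.mem_empty_iff_false, iff_false, not_lt]
      rw [hquad]
      simp only [Finset.univ_eq_empty, Finset.sum_empty]
      linarith
    rw [hset]
    simp
  -- main case
  have hjpos' : (0:ℝ) < (j:ℝ) := by exact_mod_cast hjpos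
  have h2mj : (0:ℝ) < 2*m - j := by linarith
  set s := Real.sqrt ((j:ℝ) / (2*m - j)) with hs
  have hs0 : 0 < s := Real.sqrt_pos.2 (div_pos hjpos' h2mj)
  have hs2 : s^2 = (j:ℝ) / (2*m - j) := Real.sq_sqrt (le_of_lt (div_pos hjpos' h2mj))
  have hs2' : s^2 * (2*m - j) = (j:ℝ) := by rw [hs2]; field_simp
  have hs1 : s < 1 := by
    by_contra h
    push_neg at h
    have hsq1 : 1 ≤ s^2 := by nlinarith [h]
    nlinarith [hsq1, h2mj, hs2', hm]
  set c := Real.sqrt (1 - s) with hc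
  have hcpos : 0 < c := Real.sqrt_pos.2 (by linarith)
  have hc2 : c^2 = 1 - s := Real.sq_sqrt (by linarith)
  have hc1 : c^2 < 1 := by rw [hc2]; linarith
  have hkey := key_mgf P u hmeas hindep hmgfint hsubg Q horth hcpos hc1
  rw [show (1:ℝ) - c^2 = s by rw [hc2]; ring] at hkey
  set F : Ω → ℝ := fun ω => ∑ k, (∑ i, Q k i * u i ω)^2 with hF
  have hFmeas : Measurable F := by
    apply Finset.measurable_sum
    intro k _
    exact (Finset.measurable_sum _ fun i _ => (hmeas i).const_mul _).pow_const 2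
  have hseteq : {ω | (fun i => u i ω) ⬝ᵥ A.mulVec (fun i => u i ω) > m} = {ω | F ω > m} := by
    ext ω
    simp only [Set.mem_setOf_eq]
    rw [hquad]
  rw [hseteq]
  set ε := ENNReal.ofReal (Real.exp ((c^2/2) * m)) with hε
  have hεpos : 0 < ε := ENNReal.ofReal_pos.2 (Real.exp_pos _)
  have hεtop : ε ≠ ⊤ := ENNReal.ofReal_ne_top
  have hmono : {ω | F ω > m} ⊆ {ω | ε ≤ ENNReal.ofReal (Real.exp ((c^2/2) * F ω))} := by
    intro ω hω
    simp only [Set.mem_setOf_eq] at hω ⊢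
    apply ENNReal.ofReal_le_ofReal
    apply Real.exp_le_exp.2
    apply mul_le_mul_of_nonneg_left hω.le (by positivity)
  have haemeas : AEMeasurable (fun ω => ENNReal.ofReal (Real.exp ((c^2/2) * F ω))) P :=
    ((hFmeas.const_mul _).exp.ennreal_ofReal).aemeasurable
  have hch : ε * P {ω | F ω > m} ≤ ENNReal.ofReal (((Real.sqrt s)⁻¹)^j) := by
    calc ε * P {ω | F ω > m} ≤ ε * P {ω | ε ≤ ENNReal.ofReal (Real.exp ((c^2/2) * F ω))} :=
          mul_le_mul_right (measure_mono hmono) ε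
      _ ≤ ∫⁻ ω, ENNReal.ofReal (Real.exp ((c^2/2) * F ω)) ∂P :=
          mul_meas_ge_le_lintegral₀ haemeas ε
      _ ≤ ENNReal.ofReal (((Real.sqrt s)⁻¹)^j) := hkey
  have hdiv : P {ω | F ω > m} ≤ ENNReal.ofReal (((Real.sqrt s)⁻¹)^j) / ε := by
    rw [ENNReal.le_div_iff_mul_le (Or.inl hεpos.ne') (Or.inl hεtop)]
    rw [mul_comm]
    exact hch
  have hdiv2 : ENNReal.ofReal (((Real.sqrt s)⁻¹)^j) / ε
      = ENNReal.ofReal (((Real.sqrt s)⁻¹)^j / Real.exp ((c^2/2) * m)) := by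
    rw [hε, ENNReal.ofReal_div_of_pos (Real.exp_pos _)]
  refine hdiv.trans ?_
  rw [hdiv2]
  apply ENNReal.ofReal_le_ofReal
  -- real-number final bound
  have hpow : ((Real.sqrt s)⁻¹)^j ≤ Real.exp ((j:ℝ) * ((1-s^2)/(4*s))) := by
    calc ((Real.sqrt s)⁻¹)^j ≤ (Real.exp ((1-s^2)/(4*s)))^j :=
          pow_le_pow_left₀ (by positivity) (log_ineq hs0 hs1.le) j
      _ = Real.exp ((j:ℝ) * ((1-s^2)/(4*s))) := by
          rw [← Real.exp_nat_mul]
  have hexpid : (j:ℝ) * ((1-s^2)/(4*s)) - (c^2/2) * m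
      = -m / 2 + Real.sqrt (2 * m * j - (j:ℝ)^2) / 2 := by
    have hsqrt : Real.sqrt (2*m*(j:ℝ) - (j:ℝ)^2) = s * (2*m - j) := by
      rw [show 2*m*(j:ℝ) - (j:ℝ)^2 = (s*(2*m-j))^2 by linear_combination ((j:ℝ) - 2*m) * hs2',
        Real.sqrt_sq (by positivity)]
    rw [hsqrt, hc2]
    field_simp
    linear_combination (-(2:ℝ)) * hs2'
  calc ((Real.sqrt s)⁻¹)^j / Real.exp ((c^2/2) * m)
      ≤ Real.exp ((j:ℝ) * ((1-s^2)/(4*s))) / Real.exp ((c^2/2) * m) := by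
        exact (div_le_div_iff_of_pos_right (Real.exp_pos _)).2 hpow
    _ = Real.exp ((j:ℝ) * ((1-s^2)/(4*s)) - (c^2/2) * m) := by
        rw [Real.exp_sub]
    _ = Real.exp (-m / 2 + Real.sqrt (2 * m * j - (j:ℝ)^2) / 2) := by rw [hexpid]
end
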